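/- Let H be a finite simple graph, let k ∈ {0,1}, and let G be a graph obtained from H by subdividing one edge. If p is a real number such that φ(H − W) ≤ p for every set W of edges of H with |W| = k, then φ(G − W′) ≤ p for every set W′ of edges of G with |W′| = k. -/

import Mathlib

open SimpleGraph

/-- The minimum size of a feedback vertex set of `G`. -/
noncomputable def phi {V : Type} (G : SimpleGraph V) : ℕ :=
  sInf {n : ℕ | ∃ S : Finset V, S.card = n ∧ (G.induce ((S : Set V)ᶜ)).IsAcyclic}

/-- The graph obtained from `H` by subdividing the edge `uv` once: delete the edge `uv`
and add a new vertex (`none`) adjacent exactly to `u` and `v`. -/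
def subdivideEdge {V : Type} (H : SimpleGraph V) (u v : V) : SimpleGraph (Option V) :=
  SimpleGraph.fromRel (fun x y =>
    (∃ p q : V, x = some p ∧ y = some q ∧ H.Adj p q ∧ s(p, q) ≠ s(u, v)) ∨
    (x = none ∧ (y = some u ∨ y = some v)))

/-- `a` has degree exactly two in `H`. -/
def HasDegreeTwo {V : Type} (H : SimpleGraph V) (a : V) : Prop :=
  ∃ x y : V, x ≠ y ∧ H.Adj a x ∧ H.Adj a y ∧ ∀ z : V, H.Adj a z → z = x ∨ z = y

/-- The operation `∘` applied with two distinct edges `u₁v₁`, `u₂v₂` and a degree-two vertex `a`: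
subdivide both edges (new vertices `inr 0`, `inr 1`), then add a new vertex `inr 2` adjacent to
`a` and the two subdivision vertices. -/
def circOpTwo {V : Type} (H : SimpleGraph V) (u₁ v₁ u₂ v₂ a : V) : SimpleGraph (V ⊕ Fin 3) :=
  SimpleGraph.fromRel (fun x y =>
    (∃ p q : V, x = Sum.inl p ∧ y = Sum.inl q ∧ H.Adj p q ∧
      s(p, q) ≠ s(u₁, v₁) ∧ s(p, q) ≠ s(u₂, v₂)) ∨
    (x = Sum.inr 0 ∧ (y = Sum.inl u₁ ∨ y = Sum.inl v₁)) ∨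
    (x = Sum.inr 1 ∧ (y = Sum.inl u₂ ∨ y = Sum.inl v₂)) ∨
    (x = Sum.inr 2 ∧ (y = Sum.inl a ∨ y = Sum.inr 0 ∨ y = Sum.inr 1)))

/-- The operation `∘` applied with `e₁ = e₂ = uv` and a degree-two vertex `a`: subdivide the
edge `uv` twice (replacing it by the path `u, inr 0, inr 1, v`), then add a new vertex `inr 2`
adjacent to `a` and the two subdivision vertices. -/
def circOpOne {V : Type} (H : SimpleGraph V) (u v a : V) : SimpleGraph (V ⊕ Fin 3) :=
  SimpleGraph.fromRel (fun x y =>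
    (∃ p q : V, x = Sum.inl p ∧ y = Sum.inl q ∧ H.Adj p q ∧ s(p, q) ≠ s(u, v)) ∨
    (x = Sum.inr 0 ∧ (y = Sum.inl u ∨ y = Sum.inr 1)) ∨
    (x = Sum.inr 1 ∧ y = Sum.inl v) ∨
    (x = Sum.inr 2 ∧ (y = Sum.inl a ∨ y = Sum.inr 0 ∨ y = Sum.inr 1)))

/-- `G` is obtained from `H` by one application of the operation `∘` at the degree-two
vertex `a`, using two (not necessarily distinct) edges of `H`. -/
def IsCircOp {V : Type} (H : SimpleGraph V) (a : V) (G : SimpleGraph (V ⊕ Fin 3)) : Prop :=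
  (∃ u₁ v₁ u₂ v₂ : V, H.Adj u₁ v₁ ∧ H.Adj u₂ v₂ ∧ s(u₁, v₁) ≠ s(u₂, v₂) ∧
      G = circOpTwo H u₁ v₁ u₂ v₂ a) ∨
  (∃ u v : V, H.Adj u v ∧ G = circOpOne H u v a)

/-- Membership (up to isomorphism) in the family `F_{i,j}`. -/
inductive IsInF : ∀ (i j : ℕ) {V : Type}, SimpleGraph V → Prop
  | cycle (i : ℕ) (hi : 3 ≤ i) : IsInF i 0 (SimpleGraph.cycleGraph i)
  | k4 : IsInF 1 1 (⊤ : SimpleGraph (Fin 4))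
  | subdiv {i j : ℕ} {V : Type} {H : SimpleGraph V} {u v : V}
      (huv : H.Adj u v) (hH : IsInF i j H) : IsInF (i + 1) j (subdivideEdge H u v)
  | op {i j : ℕ} {V : Type} {H : SimpleGraph V} {a : V} {G : SimpleGraph (V ⊕ Fin 3)}
      (ha : HasDegreeTwo H a) (hG : IsCircOp H a G) (hH : IsInF i j H) : IsInF i (j + 1) G
  | iso {i j : ℕ} {V W : Type} {H : SimpleGraph V} {G : SimpleGraph W}
      (e : Nonempty (G ≃g H)) (hH : IsInF i j H) : IsInF i j G

/-- `G` is a graph obtained from `H` by repeatedly (possibly zero times) subdividing edges. -/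
inductive IsSubdivisionOf : ∀ {V : Type}, SimpleGraph V → ∀ {W : Type}, SimpleGraph W → Prop
  | refl {V : Type} (G : SimpleGraph V) : IsSubdivisionOf G G
  | step {V W : Type} {H : SimpleGraph V} {G : SimpleGraph W} {u v : W}
      (huv : G.Adj u v) (h : IsSubdivisionOf H G) : IsSubdivisionOf H (subdivideEdge G u v)

/-- `G` contains an induced subdivision of `H`: some induced subgraph of `G` is isomorphic
to a graph obtained from `H` by repeatedly subdividing edges. -/
def ContainsInducedSubdivision {V W : Type} (G : SimpleGraph V) (H : SimpleGraph W) : Prop :=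
  ∃ (s : Set V) (U : Type) (K : SimpleGraph U),
    IsSubdivisionOf H K ∧ Nonempty (G.induce s ≃g K)

/-- The family `𝓕`: members of `F_{4,2} ∪ F_{4,3}` of girth at least five, together with
members `H` of `F_{3,2} ∪ F_{3,3}` having an edge `e` such that `H − e` has girth at least
five. -/
def InFamilyF {W : Type} (H : SimpleGraph W) : Prop :=
  ((IsInF 4 2 H ∨ IsInF 4 3 H) ∧ 5 ≤ H.girth) ∨
  ((IsInF 3 2 H ∨ IsInF 3 3 H) ∧ ∃ e ∈ H.edgeSet, 5 ≤ (H.deleteEdges {e}).girth)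

/-- `G` contains two vertex-disjoint cycles, each of length less than five. -/
def HasTwoDisjointShortCycles {V : Type} (G : SimpleGraph V) : Prop :=
  ∃ (u v : V) (c₁ : G.Walk u u) (c₂ : G.Walk v v), c₁.IsCycle ∧ c₂.IsCycle ∧
    c₁.length < 5 ∧ c₂.length < 5 ∧ ∀ x : V, x ∈ c₁.support → x ∉ c₂.support

section Aux

private lemma reach_map {α β : Type*} {A : SimpleGraph α} {B : SimpleGraph β} (f : α → β)
    (h : ∀ x y, A.Adj x y → B.Adj (f x) (f y) ∨ f x = f y) {x y : α}
    (hr : A.Reachable x y) : B.Reachable (f x) (f y) := by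
  obtain ⟨w⟩ := hr
  induction w with
  | nil => exact Reachable.refl _
  | cons h' p ih =>
      rcases h _ _ h' with h2 | h2
      · exact h2.reachable.trans ih
      · rw [h2]; exact ih

private lemma subdivideEdge_adj_some {V : Type} (H : SimpleGraph V) (u v p q : V) :
    (subdivideEdge H u v).Adj (some p) (some q) ↔ H.Adj p q ∧ s(p, q) ≠ s(u, v) := by
  rw [subdivideEdge, fromRel_adj]
  constructor
  · rintro ⟨hne, (⟨p', q', hp, hq, hadj, hns⟩ | ⟨h, -⟩) | (⟨p', q', hp, hq, hadj, hns⟩ | ⟨h, -⟩)⟩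
    · cases Option.some_injective V hp; cases Option.some_injective V hq
      exact ⟨hadj, hns⟩
    · exact absurd h (by simp)
    · cases Option.some_injective V hp; cases Option.some_injective V hq
      exact ⟨hadj.symm, by rwa [Sym2.eq_swap] at hns⟩
    · exact absurd h (by simp)
  · rintro ⟨h1, h2⟩
    exact ⟨by simpa using h1.ne, Or.inl (Or.inl ⟨p, q, rfl, rfl, h1, h2⟩)⟩

private lemma subdivideEdge_adj_none {V : Type} (H : SimpleGraph V) (u v : V) (x : Option V) :
    (subdivideEdge H u v).Adj none x ↔ x = some u ∨ x = some v := by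
  rw [subdivideEdge, fromRel_adj]
  constructor
  · rintro ⟨hne, (⟨p', q', hp, -⟩ | ⟨-, h⟩) | (⟨p', q', -, hq, -⟩ | ⟨h, -⟩)⟩
    · exact absurd hp (by simp)
    · exact h
    · exact absurd hq (by simp)
    · rw [h] at hne; exact absurd rfl hne
  · rintro (rfl | rfl)
    · exact ⟨by simp, Or.inl (Or.inr ⟨rfl, Or.inl rfl⟩)⟩
    · exact ⟨by simp, Or.inl (Or.inr ⟨rfl, Or.inr rfl⟩)⟩

private lemma phi_le_of_subdiv {V : Type} [Fintype V] (H' : SimpleGraph V)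
    (G' : SimpleGraph (Option V)) (u v : V)
    (hsome : ∀ p q : V, G'.Adj (some p) (some q) → H'.Adj p q ∧ s(p, q) ≠ s(u, v))
    (hnone : ∀ x, G'.Adj none x → x = some u ∨ x = some v)
    (huv' : G'.Adj none (some u) → G'.Adj none (some v) → H'.Adj u v) :
    phi G' ≤ phi H' := by
  classical
  have hne : {n : ℕ | ∃ S : Finset V, S.card = n ∧
      (H'.induce ((S : Set V)ᶜ)).IsAcyclic}.Nonempty := by
    refine ⟨(Finset.univ : Finset V).card, Finset.univ, rfl, ?_⟩
    exact fun w c hc => absurd w.2 (by simp)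
  obtain ⟨S, hScard, hSac⟩ := Nat.sInf_mem hne
  have key : (G'.induce ((((S.image some : Finset (Option V)) : Set (Option V)))ᶜ)).IsAcyclic := by
    set T : Set (Option V) := (((S.image some : Finset (Option V)) : Set (Option V)))ᶜ with hT
    have hmemT : ∀ p : V, some p ∈ T ↔ p ∉ S := by intro p; simp [hT]
    have hnoneT : (none : Option V) ∈ T := by simp [hT]
    by_cases hSuniv : ∀ x : V, x ∈ S
    · have hsub : ∀ x : T, x = (⟨none, hnoneT⟩ : T) := by
        rintro ⟨x, hx⟩
        cases x with
        | none => rfl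
        | some p => exact absurd (hSuniv p) ((hmemT p).mp hx)
      intro w c hc
      cases c with
      | nil => exact hc.ne_nil rfl
      | cons h q => exact h.ne ((hsub _).trans (hsub _).symm)
    · push_neg at hSuniv
      obtain ⟨w₀, hw₀⟩ := hSuniv
      set B := H'.induce ((S : Set V)ᶜ) with hB
      have hcmem : ∀ t : V, t ∉ S → t ∈ ((S : Set V)ᶜ) := by intro t ht; simpa using ht
      set f : T → ((S : Set V)ᶜ : Set V) := fun x =>
        if hx : ∃ p : V, x.val = some p then
          ⟨hx.choose, hcmem _ ((hmemT hx.choose).mp (hx.choose_spec ▸ x.2))⟩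
        else if h1 : G'.Adj none (some u) ∧ u ∉ S then ⟨u, hcmem _ h1.2⟩
        else if h2 : G'.Adj none (some v) ∧ v ∉ S then ⟨v, hcmem _ h2.2⟩
        else ⟨w₀, hcmem _ hw₀⟩ with hf
    -- f evaluation lemmas
      have hfsome : ∀ (x : T) (p : V) (hp : x.val = some p), (f x).val = p := by
        intro x p hp
        have hx : ∃ p : V, x.val = some p := ⟨p, hp⟩
        have : (f x).val = hx.choose := by rw [hf]; simp only [dif_pos hx]
        rw [this]
        exact Option.some_injective V ((hx.choose_spec.symm).trans hp)
      intro w c hc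
      set n₀ : T := (⟨none, hnoneT⟩ : T) with hn₀
      have hxval : ∀ (x : T), x ≠ n₀ → ∃ p : V, x.val = some p := by
        rintro ⟨x, hx⟩ hne0
        cases x with
        | none => exact absurd (Subtype.ext rfl) hne0
        | some p => exact ⟨p, rfl⟩
      -- find an edge of the cycle avoiding n₀
      have hedge : ∃ e ∈ c.edges, n₀ ∉ e := by
        by_contra hall
        push_neg at hall
        have hshape : ∀ e ∈ c.edges, ∃ x : T, e = s(n₀, x) ∧
            (x.val = some u ∨ x.val = some v) := by
          intro e he
          induction e using Sym2.ind with
          | _ a b =>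
            have hmem := hall _ he
            have hadj : (G'.induce T).Adj a b := Walk.adj_of_mem_edges c he
            rcases Sym2.mem_iff.mp hmem with h | h
            · refine ⟨b, by rw [h], ?_⟩
              have : G'.Adj none b.val := by
                have h2 : G'.Adj a.val b.val := hadj
                rw [show (a : Option V) = none from congrArg Subtype.val h.symm] at h2
                exact h2
              rcases hnone _ this with h' | h'
              · exact Or.inl h'
              · exact Or.inr h'
            · refine ⟨a, by rw [h, Sym2.eq_swap], ?_⟩
              have : G'.Adj none a.val := by
                have h2 : G'.Adj b.val a.val := hadj.symm
                rw [show (b : Option V) = none from congrArg Subtype.val h.symm] at h2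
                exact h2
              rcases hnone _ this with h' | h'
              · exact Or.inl h'
              · exact Or.inr h'
        have hlen : 3 ≤ c.edges.length := by
          rw [Walk.length_edges]; exact hc.three_le_length
        have hnd : c.edges.Nodup := hc.edges_nodup
        rcases hE : c.edges with - | ⟨e₁, - | ⟨e₂, - | ⟨e₃, rest⟩⟩⟩
        · rw [hE] at hlen; simp at hlen
        · rw [hE] at hlen; simp at hlen
        · rw [hE] at hlen; simp at hlen
        · rw [hE] at hnd
          have h12 : e₁ ≠ e₂ := by simp at hnd; tauto
          have h13 : e₁ ≠ e₃ := by simp at hnd; tauto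
          have h23 : e₂ ≠ e₃ := by simp at hnd; tauto
          obtain ⟨x₁, rfl, hv₁⟩ := hshape e₁ (by rw [hE]; simp)
          obtain ⟨x₂, rfl, hv₂⟩ := hshape e₂ (by rw [hE]; simp)
          obtain ⟨x₃, rfl, hv₃⟩ := hshape e₃ (by rw [hE]; simp)
          have hx12 : x₁ ≠ x₂ := fun h => h12 (by rw [h])
          have hx13 : x₁ ≠ x₃ := fun h => h13 (by rw [h])
          have hx23 : x₂ ≠ x₃ := fun h => h23 (by rw [h])
          rcases hv₁ with h₁ | h₁ <;> rcases hv₂ with h₂ | h₂ <;> rcases hv₃ with h₃ | h₃ <;>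
            first
              | exact hx12 (Subtype.ext (h₁.trans h₂.symm))
              | exact hx13 (Subtype.ext (h₁.trans h₃.symm))
              | exact hx23 (Subtype.ext (h₂.trans h₃.symm))
      obtain ⟨e, he, hn⟩ := hedge
      revert he hn
      induction e using Sym2.ind with
      | _ x y =>
        intro he hn
        have hxn : x ≠ n₀ := fun h => hn (by rw [h]; exact Sym2.mem_mk_left _ _)
        have hyn : y ≠ n₀ := fun h => hn (by rw [h]; exact Sym2.mem_mk_right _ _)
        obtain ⟨p, hp⟩ := hxval x hxn
        obtain ⟨q, hq⟩ := hxval y hyn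
        have hAxy : (G'.induce T).Adj x y := Walk.adj_of_mem_edges c he
        have hGpq : G'.Adj (some p) (some q) := by
          have h3 : G'.Adj x.val y.val := hAxy
          rw [hp, hq] at h3
          exact h3
        obtain ⟨hHpq, hpquv⟩ := hsome p q hGpq
        have hfx : (f x).val = p := hfsome x p hp
        have hfy : (f y).val = q := hfsome y q hq
        have hBadj : B.Adj (f x) (f y) := by
          show H'.Adj (f x).val (f y).val
          rw [hfx, hfy]; exact hHpq
        -- reachability in the cycle minus the edge
        have hreachA : ((G'.induce T) \ fromEdgeSet {s(x, y)}).Reachable x y :=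
          (adj_and_reachable_delete_edges_iff_exists_cycle.mpr ⟨w, c, hc, he⟩).2
        -- weak homomorphism for the edge-deleted graphs
        have hwh : ∀ a b : T, ((G'.induce T) \ fromEdgeSet {s(x, y)}).Adj a b →
            (B \ fromEdgeSet {s(f x, f y)}).Adj (f a) (f b) ∨ f a = f b := by
          have hnonecase : ∀ a b : T, (a : Option V) = none →
              ((G'.induce T) \ fromEdgeSet {s(x, y)}).Adj a b →
              (B \ fromEdgeSet {s(f x, f y)}).Adj (f a) (f b) ∨ f a = f b := by
            intro a b ha hab
            rw [sdiff_adj] at hab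
            obtain ⟨hab1, -⟩ := hab
            have hGab : G'.Adj none b.val := by
              have h3 : G'.Adj a.val b.val := hab1
              rw [ha] at h3
              exact h3
            have hfa : f a = if h1 : G'.Adj none (some u) ∧ u ∉ S then
                (⟨u, hcmem _ h1.2⟩ : ((S : Set V)ᶜ : Set V))
              else if h2 : G'.Adj none (some v) ∧ v ∉ S then ⟨v, hcmem _ h2.2⟩
              else ⟨w₀, hcmem _ hw₀⟩ := by
              rw [hf]
              have : ¬ ∃ p : V, a.val = some p := by
                rintro ⟨p, hp⟩; rw [ha] at hp; cases hp
              simp only [dif_neg this]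
            rcases hnone _ hGab with hbu | hbv
            · -- b = some u
              have hbu' : u ∉ S := by
                have := b.2; rw [show (b : Option V) = some u from hbu] at this
                exact (hmemT u).mp this
              have h1 : G'.Adj none (some u) ∧ u ∉ S := ⟨by rwa [hbu] at hGab, hbu'⟩
              right
              rw [hfa, dif_pos h1]
              exact Subtype.ext ((hfsome b u hbu).symm)
            · -- b = some v
              have hbv' : v ∉ S := by
                have := b.2; rw [show (b : Option V) = some v from hbv] at this
                exact (hmemT v).mp this
              have hfbv : (f b).val = v := hfsome b v hbv
              by_cases h1 : G'.Adj none (some u) ∧ u ∉ S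
              · left
                have hH'uv : H'.Adj u v := huv' h1.1 (by rwa [hbv] at hGab)
                have hfau : (f a).val = u := by rw [hfa, dif_pos h1]
                rw [sdiff_adj]
                constructor
                · show H'.Adj (f a).val (f b).val
                  rw [hfau, hfbv]; exact hH'uv
                · rw [fromEdgeSet_adj]
                  rintro ⟨hmem, -⟩
                  rw [Set.mem_singleton_iff] at hmem
                  apply hpquv
                  rcases Sym2.eq_iff.mp hmem with ⟨h1', h2'⟩ | ⟨h1', h2'⟩
                  · refine Sym2.eq_iff.mpr (Or.inl ⟨?_, ?_⟩)
                    · rw [← hfx, ← h1', hfau]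
                    · rw [← hfy, ← h2', hfbv]
                  · refine Sym2.eq_iff.mpr (Or.inr ⟨?_, ?_⟩)
                    · rw [← hfx, ← h2', hfbv]
                    · rw [← hfy, ← h1', hfau]
              · right
                have h2 : G'.Adj none (some v) ∧ v ∉ S := ⟨by rwa [hbv] at hGab, hbv'⟩
                have hfav : (f a).val = v := by rw [hfa, dif_neg h1, dif_pos h2]
                exact Subtype.ext (hfav.trans hfbv.symm)
          intro a b hab
          by_cases ha : (a : Option V) = none
          · exact hnonecase a b ha hab
          · by_cases hbn : (b : Option V) = none
            · rcases hnonecase b a hbn hab.symm with h | h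
              · exact Or.inl h.symm
              · exact Or.inr h.symm
            · obtain ⟨a', ha'⟩ := Option.ne_none_iff_exists'.mp ha
              obtain ⟨b', hb'⟩ := Option.ne_none_iff_exists'.mp hbn
              rw [sdiff_adj] at hab
              obtain ⟨hab1, hab2⟩ := hab
              have hGab : G'.Adj (some a') (some b') := by
                have h3 : G'.Adj a.val b.val := hab1
                rw [ha', hb'] at h3
                exact h3
              obtain ⟨hH'ab, -⟩ := hsome a' b' hGab
              have hfa : (f a).val = a' := hfsome a a' ha'
              have hfb : (f b).val = b' := hfsome b b' hb'
              left
              rw [sdiff_adj]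
              constructor
              · show H'.Adj (f a).val (f b).val
                rw [hfa, hfb]; exact hH'ab
              · rw [fromEdgeSet_adj]
                rintro ⟨hmem, -⟩
                rw [Set.mem_singleton_iff] at hmem
                apply hab2
                rw [fromEdgeSet_adj]
                refine ⟨Set.mem_singleton_iff.mpr ?_, hab1.ne⟩
                rcases Sym2.eq_iff.mp hmem with ⟨h1', h2'⟩ | ⟨h1', h2'⟩
                · have hax : a = x := Subtype.ext (by
                    rw [ha', hp]
                    exact congrArg some (by rw [← hfa, h1', hfx]))
                  have hby : b = y := Subtype.ext (by
                    rw [hb', hq]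
                    exact congrArg some (by rw [← hfb, h2', hfy]))
                  rw [hax, hby]
                · have hay : a = y := Subtype.ext (by
                    rw [ha', hq]
                    exact congrArg some (by rw [← hfa, h1', hfy]))
                  have hbx : b = x := Subtype.ext (by
                    rw [hb', hp]
                    exact congrArg some (by rw [← hfb, h2', hfx]))
                  rw [hay, hbx, Sym2.eq_swap]
        have hreachB := reach_map f hwh hreachA
        obtain ⟨w', c', hc', -⟩ :=
          adj_and_reachable_delete_edges_iff_exists_cycle.mp ⟨hBadj, hreachB⟩
        exact hSac c' hc'
  calc phi G' ≤ (S.image some).card := Nat.sInf_le ⟨S.image some, rfl, key⟩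
    _ = S.card := Finset.card_image_of_injective _ (Option.some_injective V)
    _ = phi H' := hScard

private lemma case_none_helper {V : Type} [Fintype V] (H : SimpleGraph V) (u v t : V)
    (huv : H.Adj u v) (ht : t = u ∨ t = v) :
    phi ((subdivideEdge H u v).deleteEdges {s(none, some t)}) ≤
      phi (H.deleteEdges {s(u, v)}) := by
  refine phi_le_of_subdiv _ _ u v ?_ ?_ ?_
  · intro a b hab
    rw [SimpleGraph.deleteEdges_adj] at hab
    obtain ⟨h1, -⟩ := hab
    obtain ⟨h2, h3⟩ := (subdivideEdge_adj_some H u v a b).mp h1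
    exact ⟨by rw [SimpleGraph.deleteEdges_adj]; exact ⟨h2, by simpa using h3⟩, h3⟩
  · intro x hx
    rw [SimpleGraph.deleteEdges_adj] at hx
    exact (subdivideEdge_adj_none H u v x).mp hx.1
  · intro hA hB
    rw [SimpleGraph.deleteEdges_adj] at hA hB
    rcases ht with rfl | rfl
    · exact (hA.2 rfl).elim
    · exact (hB.2 rfl).elim

private lemma case_some_helper {V : Type} [Fintype V] (H : SimpleGraph V) (u v p q : V)
    (huv : H.Adj u v) (hpq : H.Adj p q) (hpquv : s(p, q) ≠ s(u, v)) :
    phi ((subdivideEdge H u v).deleteEdges {s(some p, some q)}) ≤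
      phi (H.deleteEdges {s(p, q)}) := by
  refine phi_le_of_subdiv _ _ u v ?_ ?_ ?_
  · intro a b hab
    rw [SimpleGraph.deleteEdges_adj] at hab
    obtain ⟨h1, h4⟩ := hab
    obtain ⟨h2, h3⟩ := (subdivideEdge_adj_some H u v a b).mp h1
    refine ⟨?_, h3⟩
    rw [SimpleGraph.deleteEdges_adj]
    refine ⟨h2, ?_⟩
    rw [Set.mem_singleton_iff]
    intro hmem
    apply h4
    rw [Set.mem_singleton_iff]
    rcases Sym2.eq_iff.mp hmem with ⟨rfl, rfl⟩ | ⟨rfl, rfl⟩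
    · rfl
    · exact Sym2.eq_swap
  · intro x hx
    rw [SimpleGraph.deleteEdges_adj] at hx
    exact (subdivideEdge_adj_none H u v x).mp hx.1
  · intro hA hB
    rw [SimpleGraph.deleteEdges_adj]
    refine ⟨huv, ?_⟩
    rw [Set.mem_singleton_iff]
    exact fun h => hpquv h.symm

end Aux

/-- If `G` is obtained from a finite simple graph `H` by subdividing one edge,
`k ∈ {0,1}`, and `φ(H − W) ≤ p` for every set `W` of edges of `H` with `|W| = k`, then
`φ(G − W′) ≤ p` for every set `W′` of edges of `G` with `|W′| = k`. -/

theorem statement_0 {V : Type} [Fintype V] (H : SimpleGraph V) (k : ℕ) (hk : k = 0 ∨ k = 1)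
    (u v : V) (huv : H.Adj u v) (p : ℝ)
    (hH : ∀ W : Set (Sym2 V), W ⊆ H.edgeSet → W.ncard = k →
      (phi (H.deleteEdges W) : ℝ) ≤ p) :
    ∀ W' : Set (Sym2 (Option V)), W' ⊆ (subdivideEdge H u v).edgeSet → W'.ncard = k →
      (phi ((subdivideEdge H u v).deleteEdges W') : ℝ) ≤ p := by
  classical
  intro W' hW' hcard
  rcases hk with rfl | rfl
  · -- k = 0
    have hW0 : W' = ∅ := (Set.ncard_eq_zero W'.toFinite).mp hcard
    rw [hW0, SimpleGraph.deleteEdges_empty]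
    have hmain : phi (subdivideEdge H u v) ≤ phi H := by
      refine phi_le_of_subdiv H _ u v ?_ ?_ ?_
      · exact fun p q h => (subdivideEdge_adj_some H u v p q).mp h
      · exact fun x h => (subdivideEdge_adj_none H u v x).mp h
      · exact fun _ _ => huv
    have hH0 := hH ∅ (Set.empty_subset _) (by simp)
    rw [SimpleGraph.deleteEdges_empty] at hH0
    exact le_trans (by exact_mod_cast Nat.cast_le.mpr hmain) hH0
  · -- k = 1
    obtain ⟨e', rfl⟩ := Set.ncard_eq_one.mp hcard
    have he' : e' ∈ (subdivideEdge H u v).edgeSet := hW' rfl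
    revert he'
    induction e' using Sym2.ind with
    | _ x y =>
      intro he'
      rw [SimpleGraph.mem_edgeSet] at he'
      match x, y with
      | some p, some q =>
        obtain ⟨hpq, hpquv⟩ := (subdivideEdge_adj_some H u v p q).mp he'
        have hmain := case_some_helper H u v p q huv hpq hpquv
        have hH1 := hH {s(p, q)} (by simpa using hpq) (Set.ncard_singleton _)
        exact le_trans (by exact_mod_cast Nat.cast_le.mpr hmain) hH1
      | some t, none =>
        have ht : some t = some u ∨ some t = some v :=
          (subdivideEdge_adj_none H u v (some t)).mp he'.symm
        have ht' : t = u ∨ t = v := by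
          rcases ht with h | h
          · exact Or.inl (Option.some_injective V h)
          · exact Or.inr (Option.some_injective V h)
        have hmain := case_none_helper H u v t huv ht'
        rw [show s(some t, (none : Option V)) = s((none : Option V), some t) from Sym2.eq_swap]
        have hH1 := hH {s(u, v)} (by simpa using huv) (Set.ncard_singleton _)
        exact le_trans (by exact_mod_cast Nat.cast_le.mpr hmain) hH1
      | none, some t =>
        have ht : some t = some u ∨ some t = some v :=
          (subdivideEdge_adj_none H u v (some t)).mp he'
        have ht' : t = u ∨ t = v := by
          rcases ht with h | h
          · exact Or.inl (Option.some_injective V h)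
          · exact Or.inr (Option.some_injective V h)
        have hmain := case_none_helper H u v t huv ht'
        have hH1 := hH {s(u, v)} (by simpa using huv) (Set.ncard_singleton _)
        exact le_trans (by exact_mod_cast Nat.cast_le.mpr hmain) hH1
      | none, none => exact absurd rfl he'.ne
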